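/- ∑_{n≥0} (-1)^n/(2n+1)^3 = ∑_{j≥0} (1/2^{j+1}) · ( ∏_{i=1}^{j} (2i)/(2i+1) ) · ( 1 + H_j^{(1)} + (1/2)·( (H_j^{(1)})^2 + H_j^{(2)} ) ), where H_j^{(r)} = ∑_{k=1}^{j} 1/(2k+1)^r, both series converge, and the empty product and sums (j = 0) equal 1 and 0 respectively. -/

import Mathlib

open Finset

lemma alt_rec (a : ℕ → ℝ) (j : ℕ) :
    ∑ n ∈ range (j+2), (-1:ℝ)^n * ((j+1).choose n) * a n
      = ∑ n ∈ range (j+1), (-1:ℝ)^n * (j.choose n) * a n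
        - ∑ n ∈ range (j+1), (-1:ℝ)^n * (j.choose n) * a (n+1) := by
  rw [Finset.sum_range_succ' (fun n => (-1:ℝ)^n * ((j+1).choose n) * a n) (j+1),
      Finset.sum_range_succ' (fun n => (-1:ℝ)^n * (j.choose n) * a n) j]
  have hext : ∑ n ∈ range j, (-1:ℝ)^(n+1) * (j.choose (n+1)) * a (n+1)
      = ∑ n ∈ range (j+1), (-1:ℝ)^(n+1) * (j.choose (n+1)) * a (n+1) := by
    rw [Finset.sum_range_succ]
    simp [Nat.choose_eq_zero_of_lt (Nat.lt_succ_self j)]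
  rw [hext]
  have key : ∑ n ∈ range (j+1), (-1:ℝ)^(n+1) * (((j+1).choose (n+1) : ℕ) : ℝ) * a (n+1)
      = ∑ n ∈ range (j+1), (-1:ℝ)^(n+1) * (j.choose (n+1)) * a (n+1)
        - ∑ n ∈ range (j+1), (-1:ℝ)^n * (j.choose n) * a (n+1) := by
    rw [← Finset.sum_sub_distrib]
    refine Finset.sum_congr rfl ?_
    intro n _
    rw [Nat.choose_succ_succ]
    push_cast
    ring
  rw [key]
  simp
  ring
noncomputable def QQ (j m : ℕ) : ℝ := ∏ i ∈ Finset.Ico m (m+j+1), (2*(i:ℝ)+1)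
noncomputable def SS (p j m : ℕ) : ℝ := ∑ i ∈ Finset.Ico m (m+j+1), 1/(2*(i:ℝ)+1)^p
noncomputable def ff (p j m : ℕ) : ℝ :=
  ∑ n ∈ range (j+1), (-1:ℝ)^n * (j.choose n) * (1/(2*((n:ℝ)+m)+1)^p)

lemma QQ_pos (j m : ℕ) : 0 < QQ j m := by
  apply Finset.prod_pos; intro i _; positivity

lemma QQ_succ_top (j m : ℕ) : QQ (j+1) m = QQ j m * (2*((m+j+1 : ℕ):ℝ)+1) :=
  Finset.prod_Ico_succ_top (by omega) _

lemma QQ_succ_bot (j m : ℕ) : QQ (j+1) m = (2*(m:ℝ)+1) * QQ j (m+1) := by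
  rw [QQ, QQ, show m+1+j+1 = m+(j+1)+1 by omega]
  exact Finset.prod_eq_prod_Ico_succ_bot (by omega) _

lemma SS_top (p j m : ℕ) : SS p (j+1) m = SS p j m + 1/(2*((m+j+1:ℕ):ℝ)+1)^p :=
  Finset.sum_Ico_succ_top (by omega) _

lemma SS_bot (p j m : ℕ) : SS p (j+1) m = 1/(2*(m:ℝ)+1)^p + SS p j (m+1) := by
  rw [SS, SS, show m+1+j+1 = m+(j+1)+1 by omega]
  exact Finset.sum_eq_sum_Ico_succ_bot (by omega) _

lemma ff_rec (p j m : ℕ) : ff p (j+1) m = ff p j m - ff p j (m+1) := by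
  have h := alt_rec (fun n => 1/(2*((n:ℝ)+m)+1)^p) j
  rw [ff, h, ff, ff]
  congr 1
  refine Finset.sum_congr rfl fun n _ => ?_
  push_cast
  ring_nf
lemma ff_base (p m : ℕ) : ff p 0 m = 1/(2*(m:ℝ)+1)^p := by
  rw [ff]; simp

lemma QQ_base (m : ℕ) : QQ 0 m = 2*(m:ℝ)+1 := by
  rw [QQ]; simp

lemma SS_base (p m : ℕ) : SS p 0 m = 1/(2*(m:ℝ)+1)^p := by
  rw [SS]; simp

lemma xne (m : ℕ) : (2*(m:ℝ)+1) ≠ 0 := by positivity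

lemma QQ_shift (j m : ℕ) :
    QQ j (m+1) = QQ j m * (2*((m:ℝ)+j+1)+1) / (2*(m:ℝ)+1) := by
  rw [eq_div_iff (xne m), mul_comm _ (2*(m:ℝ)+1), ← QQ_succ_bot, QQ_succ_top]
  push_cast; ring

lemma id1 : ∀ j m : ℕ, ff 1 j m = 2^j * (j.factorial) / QQ j m := by
  intro j
  induction j with
  | zero => intro m; rw [ff_base, QQ_base]; simp
  | succ j ih =>
    intro m
    have h1 : QQ j m ≠ 0 := (QQ_pos j m).ne'
    have h3 : QQ (j+1) m ≠ 0 := (QQ_pos (j+1) m).ne'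
    have e1 : QQ (j+1) m = QQ j m * (2*((m:ℝ)+j+1)+1) := by
      rw [QQ_succ_top]; push_cast; ring
    rw [ff_rec, ih m, ih (m+1), QQ_shift, e1]
    have hm := xne m
    field_simp
    push_cast [Nat.factorial_succ]
    ring
lemma SS_top' (p j m : ℕ) : SS p j m = SS p (j+1) m - 1/(2*((m:ℝ)+j+1)+1)^p := by
  rw [SS_top]; push_cast; ring

lemma SS_bot' (p j m : ℕ) : SS p j (m+1) = SS p (j+1) m - 1/(2*(m:ℝ)+1)^p := by
  rw [SS_bot]; ring

lemma id2 : ∀ j m : ℕ, ff 2 j m = 2^j * (j.factorial) / QQ j m * SS 1 j m := by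
  intro j
  induction j with
  | zero => intro m; rw [ff_base, QQ_base, SS_base]; have := xne m; norm_num [Nat.factorial]; field_simp
  | succ j ih =>
    intro m
    have h1 : QQ j m ≠ 0 := (QQ_pos j m).ne'
    have h3 : QQ (j+1) m ≠ 0 := (QQ_pos (j+1) m).ne'
    have e1 : QQ (j+1) m = QQ j m * (2*((m:ℝ)+j+1)+1) := by
      rw [QQ_succ_top]; push_cast; ring
    have hy : (2*((m:ℝ)+j+1)+1) ≠ 0 := by positivity
    have hm := xne m
    rw [ff_rec, ih m, ih (m+1), QQ_shift, SS_top' 1 j m, SS_bot' 1 j m, e1]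
    field_simp
    push_cast [Nat.factorial_succ]
    ring

lemma id3 : ∀ j m : ℕ, ff 3 j m
    = 2^j * (j.factorial) / QQ j m * ((SS 1 j m)^2 + SS 2 j m) / 2 := by
  intro j
  induction j with
  | zero => intro m; rw [ff_base, QQ_base, SS_base, SS_base]; have := xne m; norm_num [Nat.factorial]; field_simp; ring
  | succ j ih =>
    intro m
    have h1 : QQ j m ≠ 0 := (QQ_pos j m).ne'
    have h3 : QQ (j+1) m ≠ 0 := (QQ_pos (j+1) m).ne'
    have e1 : QQ (j+1) m = QQ j m * (2*((m:ℝ)+j+1)+1) := by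
      rw [QQ_succ_top]; push_cast; ring
    have hy : (2*((m:ℝ)+j+1)+1) ≠ 0 := by positivity
    have hm := xne m
    rw [ff_rec, ih m, ih (m+1), QQ_shift, SS_top' 1 j m, SS_bot' 1 j m,
        SS_top' 2 j m, SS_bot' 2 j m, e1]
    field_simp
    push_cast [Nat.factorial_succ]
    ring
lemma hs_key (n J : ℕ) : ∑ i ∈ range (n+1), (((J+1).choose i : ℕ):ℝ)
    = 2 * ∑ i ∈ range (n+1), ((J.choose i : ℕ):ℝ) - (J.choose n : ℝ) := by
  rw [Finset.sum_range_succ' (fun i => (((J+1).choose i : ℕ):ℝ)) n,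
      Finset.sum_range_succ' (fun i => ((J.choose i : ℕ):ℝ)) n]
  have h3 : ∀ i ∈ range n,
      (((J+1).choose (i+1) : ℕ):ℝ) = (J.choose (i+1) : ℝ) + (J.choose i : ℝ) := by
    intro i _; rw [Nat.choose_succ_succ]; push_cast; ring
  rw [Finset.sum_congr rfl h3, Finset.sum_add_distrib]
  have hAB : ∑ i ∈ range n, ((J.choose (i+1) : ℕ):ℝ) + ((J.choose 0 : ℕ):ℝ)
      = ∑ i ∈ range n, ((J.choose i : ℕ):ℝ) + (J.choose n : ℝ) :=
    (Finset.sum_range_succ' (fun i => ((J.choose i : ℕ):ℝ)) n).symm.trans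
      (Finset.sum_range_succ (fun i => ((J.choose i : ℕ):ℝ)) n)
  simp only [Nat.choose_zero_right, Nat.cast_one] at *
  linarith [hAB]

lemma hs (n : ℕ) : ∀ J : ℕ, ∑ j ∈ range J, ((j.choose n : ℕ):ℝ)/2^(j+1)
    = 1 - (∑ i ∈ range (n+1), ((J.choose i : ℕ):ℝ))/2^J := by
  intro J
  induction J with
  | zero =>
    rw [Finset.sum_range_succ' (fun i => ((Nat.choose 0 i : ℕ):ℝ)) n]
    simp
  | succ J ih =>
    rw [Finset.sum_range_succ, ih, hs_key]
    have : (2:ℝ)^J ≠ 0 := by positivity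
    field_simp
    ring

lemma err_le (n J : ℕ) : (∑ i ∈ range (n+1), ((J.choose i : ℕ):ℝ))
    ≤ (n+1) * ((J:ℝ)+1)^n := by
  have : ∀ i ∈ range (n+1), ((J.choose i : ℕ):ℝ) ≤ ((J:ℝ)+1)^n := by
    intro i hi
    have h1 : (J.choose i) ≤ (J+1)^n := by
      calc J.choose i ≤ J^i := Nat.choose_le_pow J i
        _ ≤ (J+1)^i := Nat.pow_le_pow_left (by omega) i
        _ ≤ (J+1)^n := Nat.pow_le_pow_right (by omega) (by
            simpa [Nat.lt_succ_iff] using Finset.mem_range.mp hi)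
    calc ((J.choose i : ℕ):ℝ) ≤ (((J+1)^n : ℕ):ℝ) := by exact_mod_cast h1
      _ = ((J:ℝ)+1)^n := by push_cast; ring
  calc (∑ i ∈ range (n+1), ((J.choose i : ℕ):ℝ))
      ≤ ∑ i ∈ range (n+1), ((J:ℝ)+1)^n := Finset.sum_le_sum this
    _ = (n+1) * ((J:ℝ)+1)^n := by
        rw [Finset.sum_const, Finset.card_range]; push_cast; ring

lemma err_tendsto (n : ℕ) :
    Filter.Tendsto (fun J : ℕ => (∑ i ∈ range (n+1), ((J.choose i : ℕ):ℝ))/2^J)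
      Filter.atTop (nhds 0) := by
  have h0 : Filter.Tendsto (fun J : ℕ => ((J:ℝ))^n / 2^J) Filter.atTop (nhds 0) :=
    tendsto_pow_const_div_const_pow_of_one_lt n (by norm_num)
  have h1 : Filter.Tendsto (fun J : ℕ => (((J+1:ℕ)):ℝ)^n / 2^(J+1)) Filter.atTop (nhds 0) :=
    h0.comp (Filter.tendsto_add_atTop_nat 1)
  have h2 : Filter.Tendsto (fun J : ℕ => (2*((n:ℝ)+1)) * ((((J+1:ℕ)):ℝ)^n / 2^(J+1)))
      Filter.atTop (nhds 0) := by
    simpa using h1.const_mul (2*((n:ℝ)+1))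
  refine squeeze_zero (fun J => by positivity) (fun J => ?_) h2
  have hb := err_le n J
  have hp : (0:ℝ) < 2^J := by positivity
  rw [div_le_iff₀ hp]
  calc (∑ i ∈ range (n+1), ((J.choose i : ℕ):ℝ)) ≤ (n+1) * ((J:ℝ)+1)^n := hb
    _ = 2*((n:ℝ)+1) * ((((J+1:ℕ)):ℝ)^n / 2^(J+1)) * 2^J := by
        push_cast
        have : (2:ℝ)^(J+1) ≠ 0 := by positivity
        field_simp
        ring

lemma col_hasSum (n : ℕ) : HasSum (fun j => ((j.choose n : ℕ):ℝ)/2^(j+1)) 1 := by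
  rw [hasSum_iff_tendsto_nat_of_nonneg (fun j => by positivity)]
  have : (fun J : ℕ => ∑ j ∈ range J, ((j.choose n : ℕ):ℝ)/2^(j+1))
      = fun J => 1 - (∑ i ∈ range (n+1), ((J.choose i : ℕ):ℝ))/2^J := by
    funext J; exact hs n J
  rw [this]
  simpa using (tendsto_const_nhds (x := (1:ℝ))).sub (err_tendsto n)
lemma nat3 (j n : ℕ) : (j+1)*(j+2)*(j+3) * j.choose n
    = (n+1)*(n+2)*(n+3) * (j+3).choose (n+3) := by
  have h1 : (j+1) * j.choose n = (j+1).choose (n+1) * (n+1) := Nat.add_one_mul_choose_eq j n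
  have h2 : (j+2) * (j+1).choose (n+1) = (j+2).choose (n+2) * (n+2) :=
    Nat.add_one_mul_choose_eq (j+1) (n+1)
  have h3 : (j+3) * (j+2).choose (n+2) = (j+3).choose (n+3) * (n+3) :=
    Nat.add_one_mul_choose_eq (j+2) (n+2)
  calc (j+1)*(j+2)*(j+3) * j.choose n = (j+2)*(j+3)*((j+1) * j.choose n) := by ring
    _ = (j+2)*(j+3)*((j+1).choose (n+1) * (n+1)) := by rw [h1]
    _ = (n+1)*(j+3)*((j+2) * (j+1).choose (n+1)) := by ring
    _ = (n+1)*(j+3)*((j+2).choose (n+2) * (n+2)) := by rw [h2]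
    _ = (n+1)*(n+2)*((j+3) * (j+2).choose (n+2)) := by ring
    _ = (n+1)*(n+2)*((j+3).choose (n+3) * (n+3)) := by rw [h3]
    _ = (n+1)*(n+2)*(n+3) * (j+3).choose (n+3) := by ring

lemma term_bound (j n : ℕ) : (j.choose n : ℝ)/(2*(n:ℝ)+1)^3
    ≤ 6 * ((j+3).choose (n+3) : ℝ)/(((j:ℝ)+1)*((j:ℝ)+2)*((j:ℝ)+3)) := by
  rw [div_le_div_iff₀ (by positivity) (by positivity)]
  have hc : ((j:ℝ)+1)*((j:ℝ)+2)*((j:ℝ)+3) * (j.choose n : ℝ)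
      = ((n:ℝ)+1)*((n:ℝ)+2)*((n:ℝ)+3) * ((j+3).choose (n+3) : ℝ) := by
    have := nat3 j n
    have := congrArg (fun x : ℕ => (x:ℝ)) this
    push_cast at this
    linarith [this]
  calc (j.choose n : ℝ) * (((j:ℝ)+1)*((j:ℝ)+2)*((j:ℝ)+3))
      = ((n:ℝ)+1)*((n:ℝ)+2)*((n:ℝ)+3) * ((j+3).choose (n+3) : ℝ) := by
        rw [← hc]; ring
    _ ≤ 6*(2*(n:ℝ)+1)^3 * ((j+3).choose (n+3) : ℝ) := by
        have h1 : (0:ℝ) ≤ ((j+3).choose (n+3) : ℝ) := Nat.cast_nonneg _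
        have h2 : ((n:ℝ)+1)*((n:ℝ)+2)*((n:ℝ)+3) ≤ 6*(2*(n:ℝ)+1)^3 := by
          have : (0:ℝ) ≤ (n:ℝ) := Nat.cast_nonneg n
          nlinarith [this, sq_nonneg ((n:ℝ))]
        exact mul_le_mul_of_nonneg_right h2 h1
    _ = 6 * ((j+3).choose (n+3) : ℝ) * (2*(n:ℝ)+1)^3 := by ring

lemma choose_sum_bound (j : ℕ) :
    ∑ n ∈ range (j+1), (((j+3).choose (n+3) : ℕ):ℝ) ≤ 2^(j+3) := by
  have h1 : ∑ n ∈ range (j+1), (((j+3).choose (n+3) : ℕ):ℝ)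
      = ∑ m ∈ Finset.Ico 3 (j+4), (((j+3).choose m : ℕ):ℝ) := by
    rw [Finset.sum_Ico_eq_sum_range]
    refine Finset.sum_congr (by congr 1) fun n _ => by rw [Nat.add_comm 3 n]
  rw [h1]
  have h2 : ∑ m ∈ Finset.Ico 3 (j+4), (((j+3).choose m : ℕ):ℝ)
      ≤ ∑ m ∈ range (j+4), (((j+3).choose m : ℕ):ℝ) := by
    refine Finset.sum_le_sum_of_subset_of_nonneg ?_ (fun m _ _ => Nat.cast_nonneg _)
    rw [Finset.range_eq_Ico]
    exact Finset.Ico_subset_Ico (by omega) le_rfl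
  have h3 : ∑ m ∈ range (j+4), ((j+3).choose m) = 2^(j+3) := Nat.sum_range_choose (j+3)
  have h4 : ∑ m ∈ range (j+4), (((j+3).choose m : ℕ):ℝ) = 2^(j+3) := by
    rw [← Nat.cast_sum, h3]; push_cast; ring
  linarith [h2, h4]

lemma row_bound (j : ℕ) : ∑ n ∈ range (j+1), (j.choose n : ℝ)/(2*(n:ℝ)+1)^3
    ≤ 48 * 2^j / (((j:ℝ)+1)*((j:ℝ)+2)*((j:ℝ)+3)) := by
  have hD : (0:ℝ) < ((j:ℝ)+1)*((j:ℝ)+2)*((j:ℝ)+3) := by positivity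
  calc ∑ n ∈ range (j+1), (j.choose n : ℝ)/(2*(n:ℝ)+1)^3
      ≤ ∑ n ∈ range (j+1),
          6 * ((j+3).choose (n+3) : ℝ)/(((j:ℝ)+1)*((j:ℝ)+2)*((j:ℝ)+3)) :=
        Finset.sum_le_sum fun n _ => term_bound j n
    _ = (6/(((j:ℝ)+1)*((j:ℝ)+2)*((j:ℝ)+3))) *
          ∑ n ∈ range (j+1), (((j+3).choose (n+3) : ℕ):ℝ) := by
        rw [Finset.mul_sum]
        exact Finset.sum_congr rfl fun n _ => by ring
    _ ≤ (6/(((j:ℝ)+1)*((j:ℝ)+2)*((j:ℝ)+3))) * 2^(j+3) := by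
        refine mul_le_mul_of_nonneg_left (choose_sum_bound j) (by positivity)
    _ = 48 * 2^j / (((j:ℝ)+1)*((j:ℝ)+2)*((j:ℝ)+3)) := by
        field_simp; ring
noncomputable def FF (j n : ℕ) : ℝ := (-1:ℝ)^n * (j.choose n) / (2*(n:ℝ)+1)^3 / 2^(j+1)

lemma FF_abs (j n : ℕ) : |FF j n| = (j.choose n : ℝ) / (2*(n:ℝ)+1)^3 / 2^(j+1) := by
  rw [FF, abs_div, abs_div, abs_mul, abs_pow, abs_neg, abs_one, one_pow, one_mul,
      abs_of_nonneg (Nat.cast_nonneg _), abs_of_pos (a := (2*(n:ℝ)+1)^3) (by positivity),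
      abs_of_pos (a := (2:ℝ)^(j+1)) (by positivity)]

lemma FF_zero {j n : ℕ} (h : n ∉ range (j+1)) : FF j n = 0 := by
  rw [FF, Nat.choose_eq_zero_of_lt (by simpa [Nat.lt_succ_iff] using h)]
  simp

lemma row_abs_sum (j : ℕ) : ∑' n, |FF j n| = ∑ n ∈ range (j+1), |FF j n| :=
  tsum_eq_sum fun n hn => by rw [FF_zero hn, abs_zero]

lemma row_abs_le (j : ℕ) : ∑' n, |FF j n| ≤ 24/(((j:ℝ)+1)^2) := by
  rw [row_abs_sum]
  have h1 : ∑ n ∈ range (j+1), |FF j n|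
      = (∑ n ∈ range (j+1), (j.choose n : ℝ)/(2*(n:ℝ)+1)^3) / 2^(j+1) := by
    rw [Finset.sum_div]
    exact Finset.sum_congr rfl fun n _ => FF_abs j n
  rw [h1]
  have h2 := row_bound j
  have hp : (0:ℝ) < 2^(j+1) := by positivity
  have hD : (0:ℝ) < ((j:ℝ)+1)*((j:ℝ)+2)*((j:ℝ)+3) := by positivity
  have h3 : (∑ n ∈ range (j+1), (j.choose n : ℝ)/(2*(n:ℝ)+1)^3) / 2^(j+1)
      ≤ (48 * 2^j / (((j:ℝ)+1)*((j:ℝ)+2)*((j:ℝ)+3))) / 2^(j+1) :=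
    (div_le_div_iff_of_pos_right hp).mpr h2
  refine h3.trans ?_
  rw [div_div, div_le_div_iff₀ (by positivity) (by positivity)]
  have hj : (0:ℝ) ≤ (j:ℝ) := Nat.cast_nonneg j
  have hpow : (2:ℝ)^(j+1) = 2 * 2^j := by ring
  have hp2 : (0:ℝ) < 2^j := by positivity
  nlinarith [hp2, hj, mul_nonneg (mul_nonneg hj hj) hj,
    mul_nonneg (mul_nonneg hj hj) hp2.le, mul_nonneg hj hp2.le,
    mul_nonneg (mul_nonneg (mul_nonneg hj hj) hj) hp2.le]

lemma sq_summable : Summable (fun j : ℕ => 24/(((j:ℝ)+1)^2)) := by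
  have h0 : Summable (fun n : ℕ => 1/(n:ℝ)^2) := Real.summable_one_div_nat_pow.mpr (by norm_num)
  have h1 : Summable (fun n : ℕ => 1/((n:ℝ)+1)^2) := by
    have := (summable_nat_add_iff 1).mpr h0
    refine this.congr fun n => ?_
    push_cast
    ring
  simpa [div_eq_mul_inv, one_div] using h1.mul_left (24:ℝ)

lemma FF_abs_summable : Summable (fun p : ℕ × ℕ => |FF p.1 p.2|) := by
  refine (summable_prod_of_nonneg fun p => abs_nonneg _).mpr ⟨fun j => ?_, ?_⟩
  · exact summable_of_ne_finset_zero (s := range (j+1))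
      fun n hn => by rw [FF_zero hn, abs_zero]
  · refine Summable.of_nonneg_of_le (fun j => tsum_nonneg fun n => abs_nonneg _)
      (fun j => row_abs_le j) sq_summable

lemma FF_summable : Summable (Function.uncurry FF) := by
  rw [← summable_abs_iff]
  exact FF_abs_summable

lemma col (n : ℕ) : HasSum (fun j => FF j n) ((-1:ℝ)^n/(2*(n:ℝ)+1)^3) := by
  have h := (col_hasSum n).mul_left ((-1:ℝ)^n/(2*(n:ℝ)+1)^3)
  rw [mul_one] at h
  have e : (fun j => ((-1:ℝ)^n/(2*(n:ℝ)+1)^3) * (((j.choose n : ℕ):ℝ)/2^(j+1)))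
      = fun j => FF j n := funext fun j => by rw [FF]; ring
  rwa [e] at h
lemma Pfact : ∀ j : ℕ, (∏ i ∈ Finset.Icc 1 j, (2*(i:ℝ))/(2*(i:ℝ)+1)) * QQ j 0
    = 2^j * (j.factorial : ℝ) := by
  intro j
  induction j with
  | zero => simp [QQ_base]
  | succ j ih =>
    rw [Finset.prod_Icc_succ_top (Nat.succ_le_succ (Nat.zero_le j)), QQ_succ_top]
    have hy : (2*((j:ℝ)+1)+1) ≠ 0 := by positivity
    have hc : ((0+j+1 : ℕ):ℝ) = (j:ℝ)+1 := by push_cast; ring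
    rw [hc]
    have expand : (∏ i ∈ Finset.Icc 1 j, (2*(i:ℝ))/(2*(i:ℝ)+1))
          * ((2*((j:ℝ)+1))/(2*((j:ℝ)+1)+1)) * (QQ j 0 * (2*((j:ℝ)+1)+1))
        = ((∏ i ∈ Finset.Icc 1 j, (2*(i:ℝ))/(2*(i:ℝ)+1)) * QQ j 0) * (2*((j:ℝ)+1)) := by
      field_simp
    have hmatch : (2*(((j+1:ℕ)):ℝ))/(2*(((j+1:ℕ)):ℝ)+1) = (2*((j:ℝ)+1))/(2*((j:ℝ)+1)+1) := by
      push_cast; ring_nf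
    rw [hmatch, expand, ih]
    push_cast [Nat.factorial_succ]
    ring

lemma S_eq (p j : ℕ) : SS p j 0 = 1 + ∑ k ∈ Finset.Icc 1 j, (1:ℝ)/(2*(k:ℝ)+1)^p := by
  rw [SS, show 0+j+1 = j+1 by omega]
  rw [Finset.sum_eq_sum_Ico_succ_bot (by omega : 0 < j+1) (fun i => 1/(2*(i:ℝ)+1)^p)]
  rw [Finset.Ico_add_one_right_eq_Icc]
  norm_num

lemma row (j : ℕ) : ∑' n, FF j n
    = (1 / 2 ^ (j + 1)) * (∏ i ∈ Finset.Icc 1 j, (2 * (i:ℝ)) / (2 * (i:ℝ) + 1)) *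
        (1 + (∑ k ∈ Finset.Icc 1 j, (1 : ℝ) / (2 * (k:ℝ) + 1)) +
          (1 / 2) * ((∑ k ∈ Finset.Icc 1 j, (1 : ℝ) / (2 * (k:ℝ) + 1)) ^ 2 +
            ∑ k ∈ Finset.Icc 1 j, (1 : ℝ) / (2 * (k:ℝ) + 1) ^ 2)) := by
  have h0 : ∑' n, FF j n = ∑ n ∈ range (j+1), FF j n :=
    tsum_eq_sum fun n hn => FF_zero hn
  have h1 : ∑ n ∈ range (j+1), FF j n = ff 3 j 0 / 2^(j+1) := by
    rw [ff, Finset.sum_div]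
    refine Finset.sum_congr rfl fun n _ => ?_
    rw [FF]
    push_cast
    ring
  rw [h0, h1, id3 j 0]
  have h2 : SS 1 j 0 = 1 + ∑ k ∈ Finset.Icc 1 j, (1:ℝ)/(2*(k:ℝ)+1) := by
    have := S_eq 1 j
    simpa using this
  have h3 := S_eq 2 j
  have hQ : QQ j 0 ≠ 0 := (QQ_pos j 0).ne'
  have hP : 2^j * (j.factorial : ℝ) / QQ j 0
      = ∏ i ∈ Finset.Icc 1 j, (2*(i:ℝ))/(2*(i:ℝ)+1) := by
    rw [eq_comm, eq_div_iff hQ, Pfact]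
  rw [h2, h3, hP]
  ring
/-- New series for the Dirichlet beta function value `β(3)`. -/
theorem stmt_8 :
    Summable (fun n : ℕ => (-1 : ℝ) ^ n / (2 * n + 1) ^ 3) ∧
    Summable (fun j : ℕ =>
      (1 / 2 ^ (j + 1)) * (∏ i ∈ Finset.Icc 1 j, (2 * i : ℝ) / (2 * i + 1)) *
        (1 + (∑ k ∈ Finset.Icc 1 j, (1 : ℝ) / (2 * k + 1)) +
          (1 / 2) * ((∑ k ∈ Finset.Icc 1 j, (1 : ℝ) / (2 * k + 1)) ^ 2 +
            ∑ k ∈ Finset.Icc 1 j, (1 : ℝ) / (2 * k + 1) ^ 2))) ∧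
    (∑' n : ℕ, (-1 : ℝ) ^ n / (2 * n + 1) ^ 3) =
      ∑' j : ℕ,
        (1 / 2 ^ (j + 1)) * (∏ i ∈ Finset.Icc 1 j, (2 * i : ℝ) / (2 * i + 1)) *
          (1 + (∑ k ∈ Finset.Icc 1 j, (1 : ℝ) / (2 * k + 1)) +
            (1 / 2) * ((∑ k ∈ Finset.Icc 1 j, (1 : ℝ) / (2 * k + 1)) ^ 2 +
              ∑ k ∈ Finset.Icc 1 j, (1 : ℝ) / (2 * k + 1) ^ 2)) := by
  have hF := FF_summable
  -- column sums
  have hcolsum : (fun n : ℕ => ∑' j, FF j n)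
      = fun n : ℕ => (-1 : ℝ) ^ n / (2 * n + 1) ^ 3 :=
    funext fun n => (col n).tsum_eq
  have hrowsum : (fun j : ℕ => ∑' n, FF j n)
      = fun j : ℕ =>
        (1 / 2 ^ (j + 1)) * (∏ i ∈ Finset.Icc 1 j, (2 * i : ℝ) / (2 * i + 1)) *
          (1 + (∑ k ∈ Finset.Icc 1 j, (1 : ℝ) / (2 * k + 1)) +
            (1 / 2) * ((∑ k ∈ Finset.Icc 1 j, (1 : ℝ) / (2 * k + 1)) ^ 2 +
              ∑ k ∈ Finset.Icc 1 j, (1 : ℝ) / (2 * k + 1) ^ 2)) :=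
    funext fun j => row j
  have hsum1 : Summable (fun n : ℕ => (-1 : ℝ) ^ n / (2 * n + 1) ^ 3) := by
    rw [← hcolsum]
    exact hF.prod_symm.prod
  have hsum2 : Summable (fun j : ℕ =>
      (1 / 2 ^ (j + 1)) * (∏ i ∈ Finset.Icc 1 j, (2 * i : ℝ) / (2 * i + 1)) *
        (1 + (∑ k ∈ Finset.Icc 1 j, (1 : ℝ) / (2 * k + 1)) +
          (1 / 2) * ((∑ k ∈ Finset.Icc 1 j, (1 : ℝ) / (2 * k + 1)) ^ 2 +
            ∑ k ∈ Finset.Icc 1 j, (1 : ℝ) / (2 * k + 1) ^ 2))) := by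
    rw [← hrowsum]
    exact hF.prod
  refine ⟨hsum1, hsum2, ?_⟩
  calc (∑' n : ℕ, (-1 : ℝ) ^ n / (2 * n + 1) ^ 3)
      = ∑' (n : ℕ) (j : ℕ), FF j n := by rw [← hcolsum]
    _ = ∑' (j : ℕ) (n : ℕ), FF j n := Summable.tsum_comm hF
    _ = _ := by rw [hrowsum]
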